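/- Suppose that for all 1 ≤ t ≤ T, all u ∈ [0,1] and all f ∈ 𝓕, |E[f(X_{t,T})] − E[f(X_0(u))]| ≤ C(|t/T − u| + 1/T), and that sup_{f∈𝓕} sup_{w∈[0,1]} |E[f(X_0(w))]| ≤ M with w ↦ E[f(X_0(w))] measurable for each f. Then there is a constant C′, depending only on C and M, such that for all T ≥ 1: sup_{u∈[0,1]} sup_{f∈𝓕} | T^{−1} Σ_{t=1}^{⌊uT⌋} E[f(X_{t,T})] − ∫_0^u E[f(X_0(w))] dw | ≤ C′/T. In particular, √T · sup_{(u,v,f)∈Δ×𝓕} |E[D̂_T(u,v,f)] − D(u,v,f)| → 0 as T → ∞. -/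

import Mathlib

open MeasureTheory Filter Topology ProbabilityTheory
open scoped ENNReal NNReal BigOperators

noncomputable section

namespace GradualChangePaper

/-- The triangle `Δ = {(u,v) ∈ [0,1]² : v ≤ u}`. -/
def DeltaSet : Set (ℝ × ℝ) := {p | 0 ≤ p.2 ∧ p.2 ≤ p.1 ∧ p.1 ≤ 1}

variable {Ω : Type} [MeasurableSpace Ω] {d : ℕ} {F : Type} [PseudoMetricSpace F]

/-- Strict stationarity of a `ℤ`-indexed process: the joint law of
`(Y (t+1), …, Y (t+n))` does not depend on `t`. -/
def StrictlyStationary (P : Measure Ω) (Y : ℤ → Ω → (Fin d → ℝ)) : Prop :=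
  ∀ (n : ℕ) (t : ℤ),
    Measure.map (fun ω (i : Fin n) => Y (t + 1 + (i : ℤ)) ω) P =
      Measure.map (fun ω (i : Fin n) => Y (1 + (i : ℤ)) ω) P

/-- Condition (C1): local stationarity. -/
def CondC1 (P : Measure Ω) (X : ℕ → ℕ → Ω → (Fin d → ℝ))
    (Xap : ℝ → ℤ → Ω → (Fin d → ℝ)) (U : ℝ → ℕ → ℕ → Ω → ℝ) : Prop :=
  (∀ u ∈ Set.Icc (0:ℝ) 1, StrictlyStationary P (Xap u)) ∧
  ∃ ρ : ℝ, 0 < ρ ∧ ∃ C : ℝ, ∀ u ∈ Set.Icc (0:ℝ) 1, ∀ T t : ℕ, 1 ≤ t → t ≤ T →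
    (∫ ω, U u T t ω ^ ρ ∂P) ≤ C ∧
    (∀ᵐ ω ∂P, 0 ≤ U u T t ω ∧
      ‖X T t ω - Xap u (t : ℤ) ω‖ ≤ (|(t : ℝ) / T - u| + 1 / T) * U u T t ω)

/-- Condition (C2) with explicit mixing constants `Cmix` and `a`. -/
def CondC2With (P : Measure Ω) (X : ℕ → ℕ → Ω → (Fin d → ℝ)) (Cmix a : ℝ) : Prop :=
  0 < Cmix ∧ a ∈ Set.Ioo (0:ℝ) 1 ∧
  ∀ T t k : ℕ, 1 ≤ k → ∀ A B : Set Ω,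
    MeasurableSet[⨆ s ∈ Set.Icc 1 t, MeasurableSpace.comap (X T s) inferInstance] A →
    MeasurableSet[⨆ s ∈ Set.Icc (t + k) T, MeasurableSpace.comap (X T s) inferInstance] B →
    |(P (A ∩ B)).toReal - (P A).toReal * (P B).toReal| ≤ Cmix * a ^ k

/-- Condition (C2): strong mixing at a geometric rate. -/
def CondC2 (P : Measure Ω) (X : ℕ → ℕ → Ω → (Fin d → ℝ)) : Prop :=
  ∃ Cmix a : ℝ, CondC2With P X Cmix a

/-- Covering number of `F` at radius `w`: the minimal number of `dist`-balls of
radius `w` needed to cover `F`. -/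
def coveringNumber (F : Type) [PseudoMetricSpace F] (w : ℝ) : ℝ≥0∞ :=
  sInf {n : ℝ≥0∞ | ∃ s : Finset F, (s.card : ℝ≥0∞) = n ∧ ∀ f : F, ∃ g ∈ s, dist f g ≤ w}

/-- Condition (C3). -/
def CondC3 (P : Measure Ω) (X : ℕ → ℕ → Ω → (Fin d → ℝ))
    (ev : F → (Fin d → ℝ) → ℝ) (p : ℕ) (δ C : ℝ) : Prop :=
  TopologicalSpace.SeparableSpace F ∧ CompactSpace F ∧ (∀ f : F, Measurable (ev f)) ∧
  (∫⁻ w in Set.Ioc (0:ℝ) 1, coveringNumber F w ^ (1 / (p:ℝ)) ∂volume) < ⊤ ∧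
  (∃ Fbar : (Fin d → ℝ) → ℝ, (∀ (f : F) x, |ev f x| ≤ Fbar x) ∧
    ∀ T t : ℕ, 1 ≤ t → t ≤ T → (∫ ω, Fbar (X T t ω) ^ ((1 + δ) * (p:ℝ)) ∂P) ≤ C) ∧
  (∀ f f' : F, ∀ T t : ℕ, 1 ≤ t → t ≤ T →
    (∫ ω, |ev f (X T t ω) - ev f' (X T t ω)| ^ ((1 + δ) * (p:ℝ)) ∂P)
      ≤ C * dist f f' ^ ((1 + δ) * (p:ℝ)))

/-- Condition (C4). -/
def CondC4 (P : Measure Ω) (X : ℕ → ℕ → Ω → (Fin d → ℝ))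
    (Xap : ℝ → ℤ → Ω → (Fin d → ℝ)) (ev : F → (Fin d → ℝ) → ℝ) (C : ℝ) : Prop :=
  ∀ k : ℕ, (k = 1 ∨ k = 2) → ∀ f : F, ∀ T t : ℕ, 1 ≤ t → t ≤ T →
    ∀ u ∈ Set.Icc (0:ℝ) 1,
      (∫ ω, |ev f (X T t ω) - ev f (Xap u (t : ℤ) ω)| ^ k ∂P)
        ≤ C * (|(t : ℝ) / T - u| + 1 / T)

/-- The CUSUM statistic `D̂_T(u,v,f)` (with the convention `v/u = 0` for `u = 0`). -/
def Dhat (X : ℕ → ℕ → Ω → (Fin d → ℝ)) (ev : F → (Fin d → ℝ) → ℝ)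
    (T : ℕ) (u v : ℝ) (f : F) (ω : Ω) : ℝ :=
  (1 / (T:ℝ)) * ∑ t ∈ Finset.Icc 1 ⌊v * (T:ℝ)⌋₊, ev f (X T t ω)
    - (v / u) * ((1 / (T:ℝ)) * ∑ t ∈ Finset.Icc 1 ⌊u * (T:ℝ)⌋₊, ev f (X T t ω))

/-- The moment function `w ↦ E[f(X₀(w))]`. -/
def mfun (P : Measure Ω) (Xap : ℝ → ℤ → Ω → (Fin d → ℝ))
    (ev : F → (Fin d → ℝ) → ℝ) (f : F) (w : ℝ) : ℝ :=
  ∫ ω, ev f (Xap w 0 ω) ∂P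

/-- The population quantity `D(u,v,f)`. -/
def Dlim (P : Measure Ω) (Xap : ℝ → ℤ → Ω → (Fin d → ℝ))
    (ev : F → (Fin d → ℝ) → ℝ) (u v : ℝ) (f : F) : ℝ :=
  (∫ w in Set.Ioc (0:ℝ) v, mfun P Xap ev f w)
    - (v / u) * ∫ w in Set.Ioc (0:ℝ) u, mfun P Xap ev f w

/-- The empirical process `Ĥ_T(u,v,f) = √T (D̂_T(u,v,f) − D(u,v,f))`. -/
def Hhat (P : Measure Ω) (X : ℕ → ℕ → Ω → (Fin d → ℝ))
    (Xap : ℝ → ℤ → Ω → (Fin d → ℝ)) (ev : F → (Fin d → ℝ) → ℝ)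
    (T : ℕ) (u v : ℝ) (f : F) (ω : Ω) : ℝ :=
  Real.sqrt T * (Dhat X ev T u v f ω - Dlim P Xap ev u v f)

/-- The lagged covariance `c_l(w,f,f') = Cov(f(X₀(w)), f'(X_l(w)))`. -/
def clag (P : Measure Ω) (Xap : ℝ → ℤ → Ω → (Fin d → ℝ))
    (ev : F → (Fin d → ℝ) → ℝ) (w : ℝ) (f f' : F) (l : ℤ) : ℝ :=
  ∫ ω, (ev f (Xap w 0 ω) - ∫ ω', ev f (Xap w 0 ω') ∂P)
      * (ev f' (Xap w l ω) - ∫ ω', ev f' (Xap w l ω') ∂P) ∂P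

/-- The `l`-th term of the covariance kernel `K`. -/
def Kterm (P : Measure Ω) (Xap : ℝ → ℤ → Ω → (Fin d → ℝ))
    (ev : F → (Fin d → ℝ) → ℝ) (u v : ℝ) (f : F) (u' v' : ℝ) (f' : F) (l : ℤ) : ℝ :=
  (v * v' / (u * u')) * (∫ w in Set.Ioc (0:ℝ) (min u u'), clag P Xap ev w f f' l)
    - (v' / u') * (∫ w in Set.Ioc (0:ℝ) (min v u'), clag P Xap ev w f f' l)
    - (v / u) * (∫ w in Set.Ioc (0:ℝ) (min u v'), clag P Xap ev w f f' l)
    + ∫ w in Set.Ioc (0:ℝ) (min v v'), clag P Xap ev w f f' l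

/-- The covariance kernel `K((u,v,f),(u',v',f'))`. -/
def Kker (P : Measure Ω) (Xap : ℝ → ℤ → Ω → (Fin d → ℝ))
    (ev : F → (Fin d → ℝ) → ℝ) (u v : ℝ) (f : F) (u' v' : ℝ) (f' : F) : ℝ :=
  ∑' l : ℤ, Kterm P Xap ev u v f u' v' f' l

/-- `D̂sup_T(u) = sup_{f ∈ 𝓕} sup_{v ∈ [0,u]} |D̂_T(u,v,f)|`. -/
def DsupT (X : ℕ → ℕ → Ω → (Fin d → ℝ)) (ev : F → (Fin d → ℝ) → ℝ)
    (T : ℕ) (u : ℝ) (ω : Ω) : ℝ :=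
  sSup {x : ℝ | ∃ f : F, ∃ v ∈ Set.Icc (0:ℝ) u, x = |Dhat X ev T u v f ω|}

/-- `Dsup(u) = sup_{f ∈ 𝓕} sup_{v ∈ [0,u]} |D(u,v,f)|`. -/
def DsupLim (P : Measure Ω) (Xap : ℝ → ℤ → Ω → (Fin d → ℝ))
    (ev : F → (Fin d → ℝ) → ℝ) (u : ℝ) : ℝ :=
  sSup {x : ℝ | ∃ f : F, ∃ v ∈ Set.Icc (0:ℝ) u, x = |Dlim P Xap ev u v f|}

/-- The estimator `û₀(τ) = ∫₀¹ 1{√T · D̂sup_T(u) ≤ τ} du`. -/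
def uhat (X : ℕ → ℕ → Ω → (Fin d → ℝ)) (ev : F → (Fin d → ℝ) → ℝ)
    (T : ℕ) (τ : ℝ) (ω : Ω) : ℝ :=
  ∫ u in Set.Ioc (0:ℝ) 1, (if Real.sqrt T * DsupT X ev T u ω ≤ τ then (1:ℝ) else 0)

/-- The gradual-change-point assumption. -/
def GradualChangePoint (P : Measure Ω) (Xap : ℝ → ℤ → Ω → (Fin d → ℝ))
    (ev : F → (Fin d → ℝ) → ℝ) (u0 κ cκ : ℝ) : Prop :=
  u0 ∈ Set.Ioo (0:ℝ) 1 ∧ 0 < κ ∧ 0 < cκ ∧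
  (∀ u ∈ Set.Icc (0:ℝ) u0, DsupLim P Xap ev u = 0) ∧
  (∀ u ∈ Set.Ioc u0 1, 0 < DsupLim P Xap ev u) ∧
  Tendsto (fun u => DsupLim P Xap ev u / (u - u0) ^ κ) (𝓝[>] u0) (𝓝 cκ)

/-- `Hmax(u) = sup_{f ∈ 𝓕} sup_{0 ≤ w ≤ v ≤ u} |H(v,w,f)|` for a limit process `H`. -/
def HmaxLim (H : ℝ → ℝ → F → Ω → ℝ) (u : ℝ) (ω : Ω) : ℝ :=
  sSup {x : ℝ | ∃ f : F, ∃ v w : ℝ, 0 ≤ w ∧ w ≤ v ∧ v ≤ u ∧ x = |H v w f ω|}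

/-- The `(1−α)`-quantile `q_α(u)` of `Hmax(u)`. -/
def quant (P : Measure Ω) (H : ℝ → ℝ → F → Ω → ℝ) (α u : ℝ) : ℝ :=
  sInf {x : ℝ | 1 - α ≤ (P {ω | HmaxLim H u ω ≤ x}).toReal}

/-- `H` is a centered Gaussian process on `Δ × 𝓕` with covariance kernel `K`. -/
def IsCenteredGaussianWithCov (P : Measure Ω) (H : ℝ → ℝ → F → Ω → ℝ)
    (K : ℝ → ℝ → F → ℝ → ℝ → F → ℝ) : Prop :=
  (∀ u v : ℝ, (u, v) ∈ DeltaSet → ∀ f : F, Measurable (H u v f)) ∧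
  (∀ u v : ℝ, (u, v) ∈ DeltaSet → ∀ f : F, ∫ ω, H u v f ω ∂P = 0) ∧
  (∀ u v u' v' : ℝ, (u, v) ∈ DeltaSet → (u', v') ∈ DeltaSet → ∀ f f' : F,
    ∫ ω, H u v f ω * H u' v' f' ω ∂P = K u v f u' v' f') ∧
  (∀ (n : ℕ) (a : Fin n → ℝ) (pu pv : Fin n → ℝ) (pf : Fin n → F),
    (∀ i, (pu i, pv i) ∈ DeltaSet) →
    ∃ σ2 : ℝ≥0,
      Measure.map (fun ω => ∑ i, a i * H (pu i) (pv i) (pf i) ω) P = gaussianReal 0 σ2)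


theorem keyA {Ω : Type} [MeasurableSpace Ω] (P : Measure Ω)
    {d : ℕ} (X : ℕ → ℕ → Ω → (Fin d → ℝ)) (Xap : ℝ → ℤ → Ω → (Fin d → ℝ))
    {F : Type} (ev : F → (Fin d → ℝ) → ℝ) (C M : ℝ) (hC : 0 < C) (hM : 0 ≤ M)
    (hmeas : ∀ f : F, Measurable (fun w => mfun P Xap ev f w))
    (happrox : ∀ (T t : ℕ), 1 ≤ t → t ≤ T → ∀ u ∈ Set.Icc (0:ℝ) 1, ∀ f : F,
      |(∫ ω, ev f (X T t ω) ∂P) - mfun P Xap ev f u| ≤ C * (|(t:ℝ)/T - u| + 1/T))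
    (hbound : ∀ f : F, ∀ w ∈ Set.Icc (0:ℝ) 1, |mfun P Xap ev f w| ≤ M)
    (T : ℕ) (hT : 1 ≤ T) (u : ℝ) (hu : u ∈ Set.Icc (0:ℝ) 1) (f : F) :
    |(1/(T:ℝ)) * (∑ t ∈ Finset.Icc 1 ⌊u*(T:ℝ)⌋₊, ∫ ω, ev f (X T t ω) ∂P)
      - ∫ w in Set.Ioc (0:ℝ) u, mfun P Xap ev f w| ≤ (2*C + M) / T := by
  obtain ⟨hu0, hu1⟩ := hu
  set m : ℝ → ℝ := fun w => mfun P Xap ev f w with hm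
  set N : ℕ := ⌊u*(T:ℝ)⌋₊ with hN
  have hT0 : (0:ℝ) < T := by exact_mod_cast hT
  have huT0 : 0 ≤ u * T := mul_nonneg hu0 hT0.le
  have hNle : (N:ℝ) ≤ u * T := Nat.floor_le huT0
  have hNu : (N:ℝ)/T ≤ u := (div_le_iff₀ hT0).2 hNle
  have hNT : N ≤ T := by
    have : (N:ℝ) ≤ (T:ℝ) := hNle.trans (by nlinarith)
    exact_mod_cast this
  -- integrability of m on subintervals of [0,1]
  have hII : ∀ a b : ℝ, 0 ≤ a → a ≤ b → b ≤ 1 → IntervalIntegrable m volume a b := by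
    intro a b ha hab hb
    rw [intervalIntegrable_iff_integrableOn_Ioc_of_le hab]
    refine Measure.integrableOn_of_bounded (M := M) (by simp) (hmeas f).aestronglyMeasurable
      ((ae_restrict_iff' measurableSet_Ioc).2 (ae_of_all _ fun w hw => ?_))
    rw [Real.norm_eq_abs]
    exact hbound f w ⟨(ha.trans hw.1.le), hw.2.trans hb⟩
  -- the grid
  set a : ℕ → ℝ := fun k => (k:ℝ)/T with ha
  have hgap : ∀ i : ℕ, a (i+1) - a i = 1/T := by
    intro i
    simp only [ha]
    push_cast
    field_simp
    ring
  have hstep : ∀ i : ℕ, a i ≤ a (i+1) := fun i => by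
    have := hgap i
    have h1T : (0:ℝ) < 1/T := by positivity
    linarith
  have hamem : ∀ k : ℕ, k ≤ N → a k ∈ Set.Icc (0:ℝ) 1 := by
    intro k hk
    constructor
    · simp only [ha]; positivity
    · have hkN : (k:ℝ) ≤ N := by exact_mod_cast hk
      have : a k ≤ (N:ℝ)/T := by simp only [ha]; gcongr
      exact this.trans (hNu.trans hu1)
  have hsplit : (∫ w in Set.Ioc (0:ℝ) u, m w)
      = ∑ i ∈ Finset.range N, (∫ x in (a i)..(a (i+1)), m x) + ∫ x in (a N)..u, m x := by
    have h1 : ∑ i ∈ Finset.range N, (∫ x in (a i)..(a (i+1)), m x)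
        = ∫ x in (a 0)..(a N), m x :=
      intervalIntegral.sum_integral_adjacent_intervals (fun k hk =>
        hII _ _ (hamem k hk.le).1 (hstep k) ((hamem (k+1) hk).2))
    have h2 : (∫ x in (a 0)..(a N), m x) + (∫ x in (a N)..u, m x) = ∫ x in (a 0)..u, m x :=
      intervalIntegral.integral_add_adjacent_intervals
        (hII _ _ (hamem 0 (Nat.zero_le _)).1 (by simp only [ha]; gcongr; exact_mod_cast Nat.zero_le N) (hamem N le_rfl).2)
        (hII _ _ (hamem N le_rfl).1 hNu hu1)
    have h3 : a 0 = (0:ℝ) := by simp [ha]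
    rw [h1, h2, h3, intervalIntegral.integral_of_le hu0]
  -- rewrite the sum
  set E : ℕ → ℝ := fun t => ∫ ω, ev f (X T t ω) ∂P with hE
  have hsum : (1/(T:ℝ)) * (∑ t ∈ Finset.Icc 1 N, E t)
      = ∑ i ∈ Finset.range N, (1/(T:ℝ)) * E (1+i) := by
    rw [Finset.mul_sum, show Finset.Icc 1 N = Finset.Ico 1 (N+1) by rw [Finset.Ico_add_one_right_eq_Icc],
      Finset.sum_Ico_eq_sum_range]
    simp
  -- per-term bound
  have hterm : ∀ i ∈ Finset.range N,
      |(1/(T:ℝ)) * E (1+i) - ∫ x in (a i)..(a (i+1)), m x| ≤ (2*C/T) * (1/T) := by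
    intro i hi
    have hiN : i < N := Finset.mem_range.1 hi
    have hconst : (1/(T:ℝ)) * E (1+i) = ∫ x in (a i)..(a (i+1)), E (1+i) := by
      rw [intervalIntegral.integral_const, smul_eq_mul, hgap i]
    rw [hconst, ← intervalIntegral.integral_sub (intervalIntegrable_const)
      (hII _ _ (hamem i hiN.le).1 (hstep i) (hamem (i+1) hiN).2)]
    have hb2 : ‖∫ x in (a i)..(a (i+1)), (E (1+i) - m x)‖
        ≤ (2*C/T) * |a (i+1) - a i| := by
      apply intervalIntegral.norm_integral_le_of_norm_le_const
      intro x hx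
      rw [Set.uIoc_of_le (hstep i)] at hx
      have hx0 : 0 ≤ x := le_trans (hamem i hiN.le).1 hx.1.le
      have hx1 : x ≤ 1 := hx.2.trans (hamem (i+1) hiN).2
      have happ := happrox T (1+i) (Nat.le_add_right 1 i)
        (by omega : 1 + i ≤ T) x ⟨hx0, hx1⟩ f
      rw [Real.norm_eq_abs]
      refine happ.trans ?_
      have hxl : (i:ℝ)/T < x := hx.1
      have hxr : x ≤ ((i:ℝ)+1)/T := by
        have := hx.2; simp only [ha] at this; push_cast at this; exact this
      have hd : |((1+i:ℕ):ℝ)/T - x| ≤ 1/T := by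
        push_cast
        have e1 : ((1:ℝ)+(i:ℝ))/T = 1/T + (i:ℝ)/T := by ring
        have e2 : ((i:ℝ)+1)/T = 1/T + (i:ℝ)/T := by ring
        rw [abs_le]
        constructor
        · linarith
        · linarith
      calc C * (|((1+i:ℕ):ℝ)/T - x| + 1/T) ≤ C * (1/T + 1/T) := by
            apply mul_le_mul_of_nonneg_left _ hC.le
            linarith
        _ = 2*C/T := by ring
    rw [Real.norm_eq_abs] at hb2
    rw [hgap i] at hb2
    rwa [abs_of_nonneg (by positivity : (0:ℝ) ≤ 1/T)] at hb2
  -- tail bound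
  have htail : |∫ x in (a N)..u, m x| ≤ M * (1/T) := by
    have h1 : ‖∫ x in (a N)..u, m x‖ ≤ M * |u - a N| := by
      apply intervalIntegral.norm_integral_le_of_norm_le_const
      intro x hx
      rw [Set.uIoc_of_le hNu] at hx
      rw [Real.norm_eq_abs]
      exact hbound f x ⟨le_trans (hamem N le_rfl).1 hx.1.le, hx.2.trans hu1⟩
    rw [Real.norm_eq_abs] at h1
    refine h1.trans (mul_le_mul_of_nonneg_left ?_ hM)
    rw [abs_of_nonneg (by simp only [ha]; linarith)]
    have hlt : u * T < (N:ℝ) + 1 := Nat.lt_floor_add_one _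
    have hub : u ≤ ((N:ℝ)+1)/T := (le_div_iff₀ hT0).2 hlt.le
    have e : ((N:ℝ)+1)/T = (N:ℝ)/T + 1/T := by ring
    simp only [ha]
    linarith
  -- combine
  rw [hsplit, hsum]
  have hdecomp : ∑ i ∈ Finset.range N, (1/(T:ℝ)) * E (1+i)
      - (∑ i ∈ Finset.range N, (∫ x in (a i)..(a (i+1)), m x) + ∫ x in (a N)..u, m x)
      = (∑ i ∈ Finset.range N, ((1/(T:ℝ)) * E (1+i) - ∫ x in (a i)..(a (i+1)), m x))
        - ∫ x in (a N)..u, m x := by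
    rw [Finset.sum_sub_distrib]; ring
  rw [hdecomp]
  calc |(∑ i ∈ Finset.range N, ((1/(T:ℝ)) * E (1+i) - ∫ x in (a i)..(a (i+1)), m x))
        - ∫ x in (a N)..u, m x|
      ≤ |∑ i ∈ Finset.range N, ((1/(T:ℝ)) * E (1+i) - ∫ x in (a i)..(a (i+1)), m x)|
        + |∫ x in (a N)..u, m x| := abs_sub _ _
    _ ≤ (∑ i ∈ Finset.range N, |(1/(T:ℝ)) * E (1+i) - ∫ x in (a i)..(a (i+1)), m x|)
        + M * (1/T) := add_le_add (Finset.abs_sum_le_sum_abs _ _) htail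
    _ ≤ (∑ _i ∈ Finset.range N, (2*C/T) * (1/T)) + M * (1/T) :=
        add_le_add (Finset.sum_le_sum hterm) le_rfl
    _ = (N:ℝ) * ((2*C/T) * (1/T)) + M * (1/T) := by
        rw [Finset.sum_const, Finset.card_range]; ring
    _ ≤ (T:ℝ) * ((2*C/T) * (1/T)) + M * (1/T) := by
        have hNTr : (N:ℝ) ≤ T := by exact_mod_cast hNT
        have : (0:ℝ) ≤ (2*C/T) * (1/T) := by positivity
        nlinarith
    _ = (2*C + M) / T := by field_simp


/-- Under the local moment-approximation inequality and uniform
boundedness of the moment functions, the Riemann-sum bias is of order `1/T` uniformly,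
with a constant depending only on `C` and `M`; in particular
`√T · sup_{(u,v,f) ∈ Δ×𝓕} |E[D̂_T(u,v,f)] − D(u,v,f)| → 0`. -/
theorem bias_of_Dhat_is_uniformly_O_one_over_T
    (C M : ℝ) (hC : 0 < C) (hM : 0 ≤ M) :
    ∃ C' : ℝ, ∀ (Ω : Type) [MeasurableSpace Ω] (P : Measure Ω),
      IsProbabilityMeasure P →
      ∀ (d : ℕ) (X : ℕ → ℕ → Ω → (Fin d → ℝ)) (Xap : ℝ → ℤ → Ω → (Fin d → ℝ))
        (F : Type) (ev : F → (Fin d → ℝ) → ℝ),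
      (∀ (f : F) (T t : ℕ), Integrable (fun ω => ev f (X T t ω)) P) →
      (∀ (f : F) (u : ℝ), Integrable (fun ω => ev f (Xap u 0 ω)) P) →
      (∀ f : F, Measurable (fun w => mfun P Xap ev f w)) →
      -- the local approximation inequality for the moments
      (∀ (T t : ℕ), 1 ≤ t → t ≤ T → ∀ u ∈ Set.Icc (0:ℝ) 1, ∀ f : F,
        |(∫ ω, ev f (X T t ω) ∂P) - mfun P Xap ev f u|
          ≤ C * (|(t : ℝ) / T - u| + 1 / T)) →
      -- uniform boundedness of the moment functions
      (∀ (f : F), ∀ w ∈ Set.Icc (0:ℝ) 1, |mfun P Xap ev f w| ≤ M) →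
      ((∀ T : ℕ, 1 ≤ T → ∀ u ∈ Set.Icc (0:ℝ) 1, ∀ f : F,
          |(1 / (T:ℝ)) * (∑ t ∈ Finset.Icc 1 ⌊u * (T:ℝ)⌋₊, ∫ ω, ev f (X T t ω) ∂P)
              - ∫ w in Set.Ioc (0:ℝ) u, mfun P Xap ev f w| ≤ C' / T) ∧
        Tendsto (fun T : ℕ =>
            sSup {x : ℝ | ∃ u v : ℝ, ∃ f : F, (u, v) ∈ DeltaSet ∧
              x = Real.sqrt T *
                |(∫ ω, Dhat X ev T u v f ω ∂P) - Dlim P Xap ev u v f|})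
          atTop (𝓝 0)) := by
  refine ⟨2*C + M, ?_⟩
  intro Ω _ P hP d X Xap F ev hIntX hIntXap hmeas happrox hbound
  set K : ℝ := 2*C + M with hKdef
  have hK : 0 < K := by have := hC; have := hM; simp only [hKdef]; linarith
  have partA : ∀ T : ℕ, 1 ≤ T → ∀ u ∈ Set.Icc (0:ℝ) 1, ∀ f : F,
      |(1 / (T:ℝ)) * (∑ t ∈ Finset.Icc 1 ⌊u * (T:ℝ)⌋₊, ∫ ω, ev f (X T t ω) ∂P)
          - ∫ w in Set.Ioc (0:ℝ) u, mfun P Xap ev f w| ≤ K / T :=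
    fun T hT u hu f => keyA P X Xap ev C M hC hM hmeas happrox hbound T hT u hu f
  refine ⟨partA, ?_⟩
  -- pointwise bound on the bias of Dhat
  have hbias : ∀ T : ℕ, 1 ≤ T → ∀ u v : ℝ, ∀ f : F, (u, v) ∈ DeltaSet →
      |(∫ ω, Dhat X ev T u v f ω ∂P) - Dlim P Xap ev u v f| ≤ 2*K/T := by
    intro T hT u v f hmem
    obtain ⟨hv0, hvu, hu1⟩ := hmem
    have hu0 : 0 ≤ u := hv0.trans hvu
    have hratio0 : 0 ≤ v/u := by
      rcases eq_or_lt_of_le hu0 with h | h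
      · rw [← h]; simp
      · exact div_nonneg hv0 h.le
    have hratio1 : v/u ≤ 1 := by
      rcases eq_or_lt_of_le hu0 with h | h
      · rw [← h]; simp
      · exact (div_le_one h).2 hvu
    have hT0 : (0:ℝ) < T := by exact_mod_cast hT
    -- compute the expectation of Dhat
    have hint1 : ∀ w : ℝ, Integrable
        (fun ω => (1 / (T:ℝ)) * ∑ t ∈ Finset.Icc 1 ⌊w * (T:ℝ)⌋₊, ev f (X T t ω)) P :=
      fun w => (integrable_finset_sum _ (fun t _ => hIntX f T t)).const_mul _
    have hED : (∫ ω, Dhat X ev T u v f ω ∂P)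
        = (1 / (T:ℝ)) * (∑ t ∈ Finset.Icc 1 ⌊v * (T:ℝ)⌋₊, ∫ ω, ev f (X T t ω) ∂P)
          - (v/u) * ((1 / (T:ℝ)) * (∑ t ∈ Finset.Icc 1 ⌊u * (T:ℝ)⌋₊, ∫ ω, ev f (X T t ω) ∂P)) := by
      simp only [Dhat]
      rw [integral_sub (hint1 v) ((hint1 u).const_mul (v/u)), integral_const_mul,
        integral_const_mul, integral_const_mul,
        integral_finset_sum _ (fun t _ => hIntX f T t),
        integral_finset_sum _ (fun t _ => hIntX f T t)]
    have hAv := partA T hT v ⟨hv0, hvu.trans hu1⟩ f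
    have hAu := partA T hT u ⟨hu0, hu1⟩ f
    rw [hED]
    simp only [Dlim]
    set Sv := (1 / (T:ℝ)) * (∑ t ∈ Finset.Icc 1 ⌊v * (T:ℝ)⌋₊, ∫ ω, ev f (X T t ω) ∂P)
    set Su := (1 / (T:ℝ)) * (∑ t ∈ Finset.Icc 1 ⌊u * (T:ℝ)⌋₊, ∫ ω, ev f (X T t ω) ∂P)
    set Iv := ∫ w in Set.Ioc (0:ℝ) v, mfun P Xap ev f w
    set Iu := ∫ w in Set.Ioc (0:ℝ) u, mfun P Xap ev f w
    have e : Sv - v/u * Su - (Iv - v/u * Iu) = (Sv - Iv) - (v/u) * (Su - Iu) := by ring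
    rw [e]
    calc |(Sv - Iv) - (v/u) * (Su - Iu)|
        ≤ |Sv - Iv| + |(v/u) * (Su - Iu)| := abs_sub _ _
      _ = |Sv - Iv| + (v/u) * |Su - Iu| := by rw [abs_mul, abs_of_nonneg hratio0]
      _ ≤ K/T + 1 * (K/T) := by
          refine add_le_add hAv ?_
          refine mul_le_mul hratio1 hAu (abs_nonneg _) zero_le_one
      _ = 2*K/T := by ring
  -- squeeze
  have hsqrt : Tendsto (fun T : ℕ => Real.sqrt T) atTop atTop := by
    have h := (tendsto_rpow_atTop (by norm_num : (0:ℝ) < 1/2)).comp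
      (tendsto_natCast_atTop_atTop (R := ℝ))
    exact h.congr fun T => (Real.sqrt_eq_rpow _).symm
  have hlim : Tendsto (fun T : ℕ => 2*K * (Real.sqrt T)⁻¹) atTop (𝓝 0) := by
    have := hsqrt.inv_tendsto_atTop.const_mul (2*K)
    simpa using this
  refine squeeze_zero_norm' ?_ hlim
  rw [Filter.eventually_atTop]
  refine ⟨1, fun T hT => ?_⟩
  have hT0 : (0:ℝ) < T := by exact_mod_cast hT
  have hsT : (0:ℝ) < Real.sqrt T := Real.sqrt_pos.2 hT0
  have hBpos : 0 ≤ 2*K * (Real.sqrt T)⁻¹ := by positivity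
  have hkey : Real.sqrt T * (2*K/T) = 2*K * (Real.sqrt T)⁻¹ := by
    rw [show Real.sqrt (T:ℝ) * (2*K/(T:ℝ)) = 2*K*(Real.sqrt (T:ℝ) / (T:ℝ)) by ring,
      Real.sqrt_div_self']
    ring
  rw [Real.norm_eq_abs, abs_le]
  constructor
  · refine le_trans (neg_nonpos_of_nonneg hBpos) ?_
    apply Real.sSup_nonneg
    rintro x ⟨u, v, f, hmem, rfl⟩
    positivity
  · refine Real.sSup_le ?_ hBpos
    rintro x ⟨u, v, f, hmem, rfl⟩
    rw [← hkey]
    exact mul_le_mul_of_nonneg_left (hbias T hT u v f hmem) (Real.sqrt_nonneg _)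

end GradualChangePaper
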